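/- Assume additionally w(−1) < w(1). Let η be the Markov chain on ℤ with transition kernel P and let θ₀ := min{n ≥ 0 : η(n) = 0}. Then there exist γ > 0 and constants C < ∞, β > 0 such that for all y ∈ ℤ with y ≥ 0, E[exp(γ·θ₀) | η(0) = y] ≤ C·e^{(β/2)·y}. -/

import Mathlib

open MeasureTheory Filter
open scoped BigOperators ENNReal

noncomputable section

/-- `p(x) = w(-x)/(w(x)+w(-x))`. -/
def pfun (w : ℤ → ℝ) (x : ℤ) : ℝ := w (-x) / (w x + w (-x))

/-- `q(x) = w(x)/(w(x)+w(-x))`. -/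
def qfun (w : ℤ → ℝ) (x : ℤ) : ℝ := w x / (w x + w (-x))

/-- The Markov transition kernel `P(x,y)`. -/
def Pker (w : ℤ → ℝ) (x y : ℤ) : ℝ :=
  if x - 1 ≤ y then (∏ z ∈ Finset.Icc x y, pfun w z) * qfun w (y + 1) else 0

/-- The `m`-step transition kernel. -/
def Pm (w : ℤ → ℝ) : ℕ → ℤ → ℤ → ℝ
  | 0, x, y => if x = y then 1 else 0
  | m + 1, x, y => ∑' z : ℤ, Pm w m x z * Pker w z y

/-- The normalizing constant `Z`. -/
def Zconst (w : ℤ → ℝ) : ℝ :=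
  2 * ∑' x : ℕ, ∏ z ∈ Finset.Icc (1 : ℤ) (x : ℤ), w (-z) / w z

/-- The stationary distribution `ρ`. -/
def rho (w : ℤ → ℝ) (x : ℤ) : ℝ :=
  (Zconst w)⁻¹ * ∏ z ∈ Finset.Icc (1 : ℤ) (|2 * x + 1| / 2), w (-z) / w z

/-- The weight function `w` is positive, nondecreasing and satisfies
`lim_{z→∞} (w(z) - w(-z)) > 0`. -/
def GoodWeight (w : ℤ → ℝ) : Prop :=
  (∀ z, 0 < w z) ∧ (∀ z, w z ≤ w (z + 1)) ∧
    ∃ c > (0 : ℝ), ∀ᶠ z : ℤ in atTop, c ≤ w z - w (-z)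

/-- `η` is a Markov chain with (sub)stochastic kernel `K` started at `a`,
characterized through its cylinder probabilities. -/
def KChain {Ω : Type*} [MeasurableSpace Ω] (μ : Measure Ω)
    (K : ℤ → ℤ → ℝ) (η : ℕ → Ω → ℤ) (a : ℤ) : Prop :=
  (∀ n, Measurable (η n)) ∧
  ∀ (n : ℕ) (x : ℕ → ℤ),
    μ {ω | ∀ i ≤ n, η i ω = x i} =
      ENNReal.ofReal ((if x 0 = a then (1 : ℝ) else 0) *
        ∏ i ∈ Finset.range n, K (x i) (x (i + 1)))

set_option maxHeartbeats 1000000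

namespace Stmt7

variable {w : ℤ → ℝ}

lemma wsum_pos (hw : GoodWeight w) (z : ℤ) : 0 < w z + w (-z) :=
  add_pos (hw.1 z) (hw.1 (-z))

lemma w_mono (hw : GoodWeight w) : Monotone w :=
  monotone_int_of_le_succ hw.2.1

lemma pfun_nonneg (hw : GoodWeight w) (z : ℤ) : 0 ≤ pfun w z :=
  div_nonneg (hw.1 _).le (wsum_pos hw z).le

lemma pfun_le_one (hw : GoodWeight w) (z : ℤ) : pfun w z ≤ 1 := by
  rw [pfun, div_le_one (wsum_pos hw z)]
  linarith [hw.1 z]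

lemma q_eq (hw : GoodWeight w) (z : ℤ) : qfun w z = 1 - pfun w z := by
  have h := wsum_pos hw z
  rw [pfun, qfun]; field_simp; ring

lemma qfun_nonneg (hw : GoodWeight w) (z : ℤ) : 0 ≤ qfun w z :=
  div_nonneg (hw.1 _).le (wsum_pos hw z).le

lemma pfun_le_pstar (hw : GoodWeight w) {z : ℤ} (hz : 1 ≤ z) :
    pfun w z ≤ pfun w 1 := by
  have h1 := wsum_pos hw z
  have h2 := wsum_pos hw 1
  rw [pfun, pfun, div_le_div_iff₀ h1 h2]
  have hm1 : w (-z) ≤ w (-1) := w_mono hw (by omega)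
  have hm2 : w 1 ≤ w z := w_mono hw hz
  nlinarith [hw.1 z, hw.1 (-z), hw.1 1, hw.1 (-1)]

lemma pstar_lt_half (hw : GoodWeight w) (hw1 : w (-1) < w 1) :
    pfun w 1 < 1/2 := by
  have h := wsum_pos hw 1
  rw [pfun, div_lt_iff₀ h]
  linarith

lemma pstar_pos (hw : GoodWeight w) : 0 < pfun w 1 :=
  div_pos (hw.1 _) (wsum_pos hw 1)

lemma Pker_nonneg (hw : GoodWeight w) (x y : ℤ) : 0 ≤ Pker w x y := by
  rw [Pker]
  split
  · exact mul_nonneg (Finset.prod_nonneg fun z _ => pfun_nonneg hw z) (qfun_nonneg hw _)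
  · exact le_refl 0

lemma Pker_down (x : ℤ) : Pker w x (x - 1) = qfun w x := by
  rw [Pker, if_pos le_rfl, Finset.Icc_eq_empty (by omega), Finset.prod_empty, one_mul,
    sub_add_cancel]

lemma Pker_zero' {x z : ℤ} (h : z < x - 1) : Pker w x z = 0 := by
  rw [Pker, if_neg (by omega)]

lemma Pker_up (x : ℤ) (k : ℕ) :
    Pker w x (x + k) = (∏ z ∈ Finset.Icc x (x + k), pfun w z) * qfun w (x + k + 1) := by
  rw [Pker, if_pos (by omega)]

/-- `A x k = ∏_{z ∈ Icc x (x+k)} p(z)`. -/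
def Afun (w : ℤ → ℝ) (x : ℤ) (k : ℕ) : ℝ := ∏ z ∈ Finset.Icc x (x + k), pfun w z

lemma Afun_zero (x : ℤ) : Afun w x 0 = pfun w x := by
  simp [Afun]

lemma Afun_succ (x : ℤ) (k : ℕ) :
    Afun w x (k + 1) = Afun w x k * pfun w (x + k + 1) := by
  rw [Afun, Afun]
  have h : Finset.Icc x (x + (k + 1 : ℕ)) = insert (x + k + 1) (Finset.Icc x (x + k)) := by
    ext z; simp [Finset.mem_Icc]; omega
  rw [h, Finset.prod_insert (by simp [Finset.mem_Icc]), mul_comm]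

lemma Afun_nonneg (hw : GoodWeight w) (x : ℤ) (k : ℕ) : 0 ≤ Afun w x k :=
  Finset.prod_nonneg fun z _ => pfun_nonneg hw z

lemma Afun_anti (hw : GoodWeight w) (x : ℤ) (k : ℕ) : Afun w x (k + 1) ≤ Afun w x k := by
  rw [Afun_succ]
  nlinarith [Afun_nonneg hw x k, pfun_le_one hw (x + k + 1), pfun_nonneg hw (x + k + 1)]

lemma Afun_le (hw : GoodWeight w) {x : ℤ} (hx : 1 ≤ x) (k : ℕ) :
    Afun w x k ≤ pfun w 1 ^ (k + 1) := by
  have h : Afun w x k ≤ ∏ z ∈ Finset.Icc x (x + k), pfun w 1 :=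
    Finset.prod_le_prod (fun z _ => pfun_nonneg hw z)
      (fun z hz => pfun_le_pstar hw (by simp [Finset.mem_Icc] at hz; omega))
  rw [Finset.prod_const, Int.card_Icc] at h
  convert h using 2
  omega

/-- The key real series bound: `∑ (A k - A (k+1)) c^k ≤ A 0 + (1-c⁻¹)·Φ`. -/
lemma abel_bound (hw : GoodWeight w) {x : ℤ} (hx : 1 ≤ x) {c : ℝ} (hc : 1 < c)
    (hs : pfun w 1 * c < 1) :
    Summable (fun k : ℕ => (Afun w x k - Afun w x (k + 1)) * c ^ k) ∧
    ∑' k : ℕ, (Afun w x k - Afun w x (k + 1)) * c ^ k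
      ≤ pfun w x + (1 - c⁻¹) * (pfun w 1 ^ 2 * c / (1 - pfun w 1 * c)) := by
  set p := pfun w 1 with hp
  have hp0 : 0 ≤ p := pfun_nonneg hw 1
  have hc0 : (0:ℝ) < c := by linarith
  have hs0 : 0 ≤ p * c := by positivity
  have hAc : ∀ k : ℕ, Afun w x k * c ^ k ≤ p * (p * c) ^ k := by
    intro k
    calc Afun w x k * c ^ k ≤ p ^ (k+1) * c ^ k :=
          mul_le_mul_of_nonneg_right (Afun_le hw hx k) (by positivity)
      _ = p * (p * c) ^ k := by rw [mul_pow, pow_succ]; ring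
  have hsum1 : Summable (fun k : ℕ => Afun w x k * c ^ k) := by
    apply Summable.of_nonneg_of_le
      (fun k => mul_nonneg (Afun_nonneg hw x k) (by positivity)) hAc
    exact (summable_geometric_of_lt_one hs0 hs).mul_left p
  have hsum2 : Summable (fun k : ℕ => Afun w x (k+1) * c ^ (k+1)) :=
    (summable_nat_add_iff 1).2 hsum1
  have hsum2' : Summable (fun k : ℕ => c⁻¹ * (Afun w x (k+1) * c ^ (k+1))) :=
    hsum2.mul_left _
  have hident : ∀ k : ℕ, (Afun w x k - Afun w x (k + 1)) * c ^ k
      = Afun w x k * c ^ k - c⁻¹ * (Afun w x (k+1) * c ^ (k+1)) := by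
    intro k
    have : c⁻¹ * c ^ (k+1) = c ^ k := by
      rw [pow_succ, mul_comm (c ^ k) c, ← mul_assoc, inv_mul_cancel₀ hc0.ne', one_mul]
    rw [sub_mul, mul_comm (c⁻¹) _, mul_assoc, mul_comm _ (c⁻¹), this]
  have hsum3 : Summable (fun k : ℕ => (Afun w x k - Afun w x (k + 1)) * c ^ k) :=
    Summable.congr (hsum1.sub hsum2') (fun k => (hident k).symm)
  refine ⟨hsum3, ?_⟩
  have e1 : ∑' k : ℕ, (Afun w x k - Afun w x (k + 1)) * c ^ k
      = (∑' k : ℕ, Afun w x k * c ^ k) - c⁻¹ * ∑' k : ℕ, Afun w x (k+1) * c ^ (k+1) := by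
    rw [tsum_congr hident, Summable.tsum_sub hsum1 hsum2', tsum_mul_left]
  have e2 : (∑' k : ℕ, Afun w x k * c ^ k)
      = Afun w x 0 + ∑' k : ℕ, Afun w x (k+1) * c ^ (k+1) := by
    rw [Summable.tsum_eq_zero_add hsum1, pow_zero, mul_one]
  set S2 := ∑' k : ℕ, Afun w x (k+1) * c ^ (k+1) with hS2
  have hS2le : S2 ≤ p ^ 2 * c / (1 - p * c) := by
    have hb : ∀ k : ℕ, Afun w x (k+1) * c ^ (k+1) ≤ p^2 * c * (p*c)^k := by
      intro k
      calc Afun w x (k+1) * c ^ (k+1) ≤ p * (p*c)^(k+1) := hAc (k+1)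
        _ = p^2 * c * (p*c)^k := by rw [pow_succ]; ring
    calc S2 ≤ ∑' k : ℕ, p^2*c*(p*c)^k :=
          Summable.tsum_le_tsum hb hsum2 ((summable_geometric_of_lt_one hs0 hs).mul_left _)
      _ = p^2*c * (1 - p*c)⁻¹ := by
          rw [tsum_mul_left, tsum_geometric_of_lt_one hs0 hs]
      _ = p^2*c/(1-p*c) := by rw [div_eq_mul_inv]
  have hS2nonneg : 0 ≤ S2 := by
    apply tsum_nonneg
    intro k
    exact mul_nonneg (Afun_nonneg hw x _) (by positivity)
  rw [e1, e2, Afun_zero]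
  have hcinv : c⁻¹ ≤ 1 := by
    rw [inv_le_one_iff₀]; right; linarith
  nlinarith [hS2le, hS2nonneg]

/-- The modified kernel that kills paths through `0`, in `ℝ≥0∞`. -/
def Kp (w : ℤ → ℝ) (x z : ℤ) : ℝ≥0∞ := if z ≠ 0 then ENNReal.ofReal (Pker w x z) else 0

/-- The per-step contraction rate. -/
def rrate (w : ℤ → ℝ) (c : ℝ) : ℝ :=
  1 - (1 - c⁻¹) * ((1 - pfun w 1) - pfun w 1 ^ 2 * c / (1 - pfun w 1 * c))

lemma step (hw : GoodWeight w) {b c : ℝ} (hb : Real.exp b = c) (hc : 1 < c)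
    (hs : pfun w 1 * c < 1) {x : ℤ} (hx : 1 ≤ x) :
    ∑' z : ℤ, Kp w x z * ENNReal.ofReal (Real.exp (b * z))
      ≤ ENNReal.ofReal (rrate w c) * ENNReal.ofReal (Real.exp (b * x)) := by
  have hc0 : (0:ℝ) < c := by linarith
  set f : ℤ → ℝ≥0∞ := fun z => Kp w x z * ENNReal.ofReal (Real.exp (b * z)) with hf
  have hfzero : ∀ z : ℤ, z < x - 1 → f z = 0 := by
    intro z hz
    simp only [hf, Kp, Pker_zero' hz, ENNReal.ofReal_zero, ite_self, zero_mul]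
  have hsupp : Function.support f ⊆ Set.range (fun k : ℕ => x - 1 + (k : ℤ)) := by
    intro z hz
    by_contra hzr
    rcases lt_or_ge z (x - 1) with h | h
    · exact hz (hfzero z h)
    · exact hzr ⟨(z - (x - 1)).toNat, by show x - 1 + ((z - (x - 1)).toNat : ℤ) = z; omega⟩
  have hinj : Function.Injective (fun k : ℕ => x - 1 + (k : ℤ)) := by
    intro a b' hab; simpa using hab
  have h1 : ∑' z : ℤ, f z = ∑' k : ℕ, f (x - 1 + (k : ℤ)) :=
    (Function.Injective.tsum_eq hinj hsupp).symm
  have h2 : ∑' k : ℕ, f (x - 1 + (k : ℤ)) = f (x - 1) + ∑' k : ℕ, f (x + (k : ℤ)) := by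
    rw [tsum_eq_zero_add' ENNReal.summable]
    congr 1
    · congr 1; omega
    · apply tsum_congr; intro k; congr 1; push_cast; ring
  have hpx : pfun w x ≤ pfun w 1 := pfun_le_pstar hw hx
  have hexp1 : Real.exp (b * ((x : ℝ) - 1)) = c⁻¹ * Real.exp (b * x) := by
    rw [mul_sub, mul_one, Real.exp_sub, hb, div_eq_inv_mul]
  have hg0 : f (x - 1) ≤ ENNReal.ofReal ((1 - pfun w x) * (c⁻¹ * Real.exp (b * x))) := by
    have hcast : ((x - 1 : ℤ) : ℝ) = (x : ℝ) - 1 := by push_cast; ring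
    have hq : Pker w x (x - 1) = 1 - pfun w x := by rw [Pker_down, q_eq hw]
    simp only [hf, Kp, hcast, hexp1]
    split
    · rw [hq, ← ENNReal.ofReal_mul (by linarith [pfun_le_one hw x] : (0:ℝ) ≤ 1 - pfun w x)]
    · simp
  have hAk : ∀ k : ℕ, (0:ℝ) ≤ Afun w x k - Afun w x (k + 1) := by
    intro k; linarith [Afun_anti hw x k]
  have hgk : ∀ k : ℕ, f (x + (k : ℤ))
      ≤ ENNReal.ofReal ((Afun w x k - Afun w x (k + 1)) * c ^ k * Real.exp (b * x)) := by
    intro k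
    have hPk : Pker w x (x + k) = Afun w x k - Afun w x (k + 1) := by
      rw [Pker_up, q_eq hw, Afun_succ]
      show Afun w x k * (1 - pfun w (x + k + 1)) = _
      ring
    have hexp2 : Real.exp (b * ((x : ℝ) + (k : ℕ))) = c ^ k * Real.exp (b * x) := by
      rw [mul_add, Real.exp_add, mul_comm b (k:ℝ), Real.exp_nat_mul, hb, mul_comm]
    have hcast : ((x + (k : ℕ) : ℤ) : ℝ) = (x : ℝ) + (k : ℕ) := by push_cast; ring
    simp only [hf, Kp, hcast, hexp2]
    split
    · rw [hPk]
      exact le_of_eq (by rw [← ENNReal.ofReal_mul (hAk k), mul_assoc])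
    · simp
  obtain ⟨hsum3, hT⟩ := abel_bound hw hx hc hs
  have hE : (0:ℝ) < Real.exp (b * x) := Real.exp_pos _
  calc ∑' z : ℤ, f z = f (x - 1) + ∑' k : ℕ, f (x + (k : ℤ)) := by rw [h1, h2]
    _ ≤ ENNReal.ofReal ((1 - pfun w x) * (c⁻¹ * Real.exp (b * x)))
        + ∑' k : ℕ, ENNReal.ofReal ((Afun w x k - Afun w x (k + 1)) * c ^ k * Real.exp (b * x)) :=
        add_le_add hg0 (ENNReal.tsum_le_tsum hgk)
    _ = ENNReal.ofReal ((1 - pfun w x) * (c⁻¹ * Real.exp (b * x)))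
        + ENNReal.ofReal (∑' k : ℕ, (Afun w x k - Afun w x (k + 1)) * c ^ k * Real.exp (b * x)) := by
        rw [ENNReal.ofReal_tsum_of_nonneg
          (fun k => mul_nonneg (mul_nonneg (hAk k) (pow_nonneg hc0.le k)) hE.le)
          (hsum3.mul_right _)]
    _ ≤ ENNReal.ofReal (rrate w c * Real.exp (b * x)) := by
        rw [← ENNReal.ofReal_add (mul_nonneg (by linarith [pfun_le_one hw x] : (0:ℝ) ≤ 1 - pfun w x)
            (by positivity : (0:ℝ) ≤ c⁻¹ * Real.exp (b * x)))
          (tsum_nonneg fun k => mul_nonneg (mul_nonneg (hAk k) (pow_nonneg hc0.le k)) hE.le)]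
        apply ENNReal.ofReal_le_ofReal
        rw [tsum_mul_right]
        have hcinv : c⁻¹ ≤ 1 := by rw [inv_le_one_iff₀]; right; linarith
        have hcinv0 : (0:ℝ) < c⁻¹ := by positivity
        have key : (1 - pfun w x) * c⁻¹ + (∑' k : ℕ, (Afun w x k - Afun w x (k + 1)) * c ^ k)
            ≤ rrate w c := by
          rw [rrate]
          nlinarith [mul_nonneg (sub_nonneg.2 hcinv) (sub_nonneg.2 hpx)]
        linarith [mul_le_mul_of_nonneg_right key hE.le]
    _ = ENNReal.ofReal (rrate w c) * ENNReal.ofReal (Real.exp (b * x)) :=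
        ENNReal.ofReal_mul (by
          have hA : (0:ℝ) ≤ 1 - c⁻¹ := by
            have : c⁻¹ ≤ 1 := by rw [inv_le_one_iff₀]; right; linarith
            linarith
          have hB : (0:ℝ) ≤ pfun w 1 + pfun w 1 ^ 2 * c / (1 - pfun w 1 * c) := by
            have h1 : (0:ℝ) ≤ pfun w 1 ^ 2 * c / (1 - pfun w 1 * c) :=
              div_nonneg (mul_nonneg (sq_nonneg _) hc0.le) (by linarith)
            linarith [pfun_nonneg hw 1]
          show (0:ℝ) ≤ 1 - (1 - c⁻¹) * ((1 - pfun w 1) - pfun w 1 ^ 2 * c / (1 - pfun w 1 * c))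
          nlinarith [mul_nonneg hA hB, inv_nonneg.2 hc0.le] )

lemma rrate_nonneg (hw : GoodWeight w) {c : ℝ} (hc : 1 < c) (hs : pfun w 1 * c < 1) :
    0 ≤ rrate w c := by
  have hc0 : (0:ℝ) < c := by linarith
  have hA : (0:ℝ) ≤ 1 - c⁻¹ := by
    have : c⁻¹ ≤ 1 := by rw [inv_le_one_iff₀]; right; linarith
    linarith
  have hB : (0:ℝ) ≤ pfun w 1 + pfun w 1 ^ 2 * c / (1 - pfun w 1 * c) := by
    have h1 : (0:ℝ) ≤ pfun w 1 ^ 2 * c / (1 - pfun w 1 * c) :=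
      div_nonneg (mul_nonneg (sq_nonneg _) hc0.le) (by linarith)
    linarith [pfun_nonneg hw 1]
  rw [rrate]
  nlinarith [mul_nonneg hA hB, inv_nonneg.2 hc0.le]

/-- Path sums from `x`, all later coordinates nonzero, of length `n`. -/
def ufun (w : ℤ → ℝ) : ℕ → ℤ → ℝ≥0∞
  | 0, _ => 1
  | n + 1, x => ∑' z : ℤ, Kp w x z * ufun w n z

lemma ufun_le (hw : GoodWeight w) {b c : ℝ} (hb : Real.exp b = c) (hc : 1 < c)
    (hs : pfun w 1 * c < 1) (hb0 : 0 ≤ b) :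
    ∀ n : ℕ, ∀ x : ℤ, 1 ≤ x →
      ufun w n x ≤ ENNReal.ofReal (rrate w c) ^ n * ENNReal.ofReal (Real.exp (b * x)) := by
  intro n
  induction n with
  | zero =>
    intro x hx
    rw [ufun, pow_zero, one_mul]
    rw [show (1:ℝ≥0∞) = ENNReal.ofReal 1 by simp]
    apply ENNReal.ofReal_le_ofReal
    rw [← Real.exp_zero]
    apply Real.exp_le_exp.2
    have : (1:ℝ) ≤ (x:ℝ) := by exact_mod_cast hx
    nlinarith
  | succ n ih =>
    intro x hx
    rw [ufun]
    calc ∑' z : ℤ, Kp w x z * ufun w n z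
        ≤ ∑' z : ℤ, Kp w x z * (ENNReal.ofReal (rrate w c) ^ n * ENNReal.ofReal (Real.exp (b * z))) := by
          apply ENNReal.tsum_le_tsum
          intro z
          rcases eq_or_ne z 0 with rfl | hz
          · simp [Kp]
          rcases lt_or_ge z (x - 1) with h | h
          · simp [Kp, Pker_zero' h]
          · have hz1 : 1 ≤ z := by omega
            exact mul_le_mul_right (ih z hz1) _
      _ = ENNReal.ofReal (rrate w c) ^ n * ∑' z : ℤ, Kp w x z * ENNReal.ofReal (Real.exp (b * z)) := by
          rw [← ENNReal.tsum_mul_left]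
          apply tsum_congr; intro z; ring
      _ ≤ ENNReal.ofReal (rrate w c) ^ n * (ENNReal.ofReal (rrate w c) * ENNReal.ofReal (Real.exp (b * x))) :=
          mul_le_mul_right (step hw hb hc hs hx) _
      _ = ENNReal.ofReal (rrate w c) ^ (n + 1) * ENNReal.ofReal (Real.exp (b * x)) := by
          rw [pow_succ]; ring

/-- Path-sum identity. -/
lemma S_eq (w : ℤ → ℝ) : ∀ (n : ℕ) (φ : ℤ → ℝ≥0∞),
    (∑' v : Fin (n + 1) → ℤ, φ (v 0) * ∏ i : Fin n, Kp w (v i.castSucc) (v i.succ))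
      = ∑' x : ℤ, φ x * ufun w n x := by
  intro n
  induction n with
  | zero =>
    intro φ
    rw [← ((Equiv.funUnique (Fin 1) ℤ).symm).tsum_eq
      (fun v : Fin 1 → ℤ => φ (v 0) * ∏ i : Fin 0, Kp w (v i.castSucc) (v i.succ))]
    apply tsum_congr; intro x
    simp [ufun]
  | succ n ih =>
    intro φ
    set F : (Fin (n + 2) → ℤ) → ℝ≥0∞ :=
      fun v => φ (v 0) * ∏ i : Fin (n + 1), Kp w (v i.castSucc) (v i.succ) with hF
    have hinner : ∀ (x : ℤ) (v : Fin (n + 1) → ℤ),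
        F (Fin.cons x v)
          = φ x * (Kp w x (v 0) * ∏ i : Fin n, Kp w (v i.castSucc) (v i.succ)) := by
      intro x v
      simp only [hF]
      rw [Fin.prod_univ_succ]
      simp only [Fin.castSucc_zero, Fin.cons_zero, Fin.cons_succ, ← Fin.succ_castSucc]
      try ring
    calc ∑' v : Fin (n + 2) → ℤ, F v
        = ∑' p : ℤ × (Fin (n + 1) → ℤ), F (Fin.cons p.1 p.2) :=
          ((Fin.consEquiv (fun _ : Fin (n + 2) => ℤ)).tsum_eq F).symm
      _ = ∑' x : ℤ, ∑' v : Fin (n + 1) → ℤ, F (Fin.cons x v) :=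
          ENNReal.tsum_prod (f := fun x v => F (Fin.cons x v))
      _ = ∑' x : ℤ, φ x * ufun w (n + 1) x := by
          apply tsum_congr; intro x
          calc ∑' v : Fin (n + 1) → ℤ, F (Fin.cons x v)
              = ∑' v : Fin (n + 1) → ℤ,
                  φ x * (Kp w x (v 0) * ∏ i : Fin n, Kp w (v i.castSucc) (v i.succ)) :=
                tsum_congr (hinner x)
            _ = φ x * ∑' v : Fin (n + 1) → ℤ,
                  Kp w x (v 0) * ∏ i : Fin n, Kp w (v i.castSucc) (v i.succ) :=
                ENNReal.tsum_mul_left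
            _ = φ x * ∑' z : ℤ, Kp w x z * ufun w n z := by rw [ih (fun z => Kp w x z)]
            _ = φ x * ufun w (n + 1) x := by rw [ufun]

end Stmt7

/-- under the extra assumption `w(-1) < w(1)`, there are `γ > 0`, `C < ∞`,
`β > 0` such that for every starting point `y ≥ 0` the hitting time
`θ₀ := min{n ≥ 0 : η(n) = 0}` of the chain with kernel `P` started at `y` satisfies
`E[exp(γ θ₀)] ≤ C e^{(β/2) y}`. -/
theorem stmt_7 (w : ℤ → ℝ) (hw : GoodWeight w) (hw1 : w (-1) < w 1) :
    ∃ γ > (0 : ℝ), ∃ C : ℝ, ∃ β > (0 : ℝ), ∀ y : ℤ, 0 ≤ y →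
      ∀ (Ω : Type) [MeasurableSpace Ω] (μ : Measure Ω) [IsProbabilityMeasure μ]
        (η : ℕ → Ω → ℤ), KChain μ (Pker w) η y →
        (∑' n : ℕ, ENNReal.ofReal (Real.exp (γ * n)) *
            μ {ω | η n ω = 0 ∧ ∀ m < n, η m ω ≠ 0}) +
          ⊤ * μ {ω | ∀ n, η n ω ≠ 0} ≤
        ENNReal.ofReal (C * Real.exp (β / 2 * y)) := by
  classical
  open Stmt7 in
  -- constants
  set p : ℝ := pfun w 1 with hpdef
  have hp0 : 0 < p := pstar_pos hw
  have hp2 : p < 1/2 := pstar_lt_half hw hw1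
  set c : ℝ := 1 + (1 - 2*p)/2 with hcdef
  have hc1 : 1 < c := by rw [hcdef]; nlinarith
  have hc32 : c < 3/2 := by rw [hcdef]; nlinarith
  have hc0 : (0:ℝ) < c := by linarith
  have hs : p * c < 1 - p := by rw [hcdef]; nlinarith
  have hs1 : p * c < 1 := by nlinarith
  set b : ℝ := Real.log c with hbdef
  have hb : Real.exp b = c := Real.exp_log hc0
  have hb0 : 0 < b := Real.log_pos hc1
  set r : ℝ := rrate w c with hrdef
  have hr0 : 0 ≤ r := rrate_nonneg hw hc1 hs1
  have hΦ : pfun w 1 ^ 2 * c / (1 - pfun w 1 * c) < 1 - pfun w 1 := by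
    rw [div_lt_iff₀ (by rw [← hpdef]; linarith)]
    rw [← hpdef]
    nlinarith
  have hr1 : r < 1 := by
    rw [hrdef, rrate]
    have h1 : 0 < 1 - c⁻¹ := by
      have : c⁻¹ < 1 := by rw [inv_lt_one_iff₀]; right; exact hc1
      linarith
    nlinarith [mul_pos h1 (by rw [← hpdef] at hΦ ⊢; linarith : (0:ℝ) < (1 - pfun w 1) - pfun w 1 ^ 2 * c / (1 - pfun w 1 * c))]
  set sq : ℝ := Real.sqrt r with hsqdef
  have hsq0 : 0 ≤ sq := Real.sqrt_nonneg r
  have hsq1 : sq < 1 := by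
    rw [hsqdef]
    rw [show (1:ℝ) = Real.sqrt 1 by simp]
    exact Real.sqrt_lt_sqrt hr0 (by simpa using hr1)
  have hsq2 : sq ^ 2 = r := Real.sq_sqrt hr0
  have hsqpos : 0 < sq ∨ sq = 0 := hsq0.lt_or_eq.imp id Eq.symm
  -- if r = 0 then sq = 0; γ needs sq > 0. Handle: use sq' := max sq (1/2)? Instead note r ≥ 0 may be 0.
  -- use sqq := max sq (1/2) : then r ≤ sqq^2? r = sq^2 ≤ sqq^2, sqq < 1, sqq > 0.
  set sqq : ℝ := max sq (1/2) with hsqqdef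
  have hsqq0 : (0:ℝ) < sqq := lt_max_of_lt_right one_half_pos
  have hsqq1 : sqq < 1 := max_lt hsq1 (by norm_num)
  have hrle : r ≤ sqq ^ 2 := by
    rw [← hsq2]
    have : sq ≤ sqq := le_max_left _ _
    nlinarith
  refine ⟨Real.log sqq⁻¹, Real.log_pos (by rw [one_lt_inv_iff₀]; exact ⟨hsqq0, hsqq1⟩),
    1 + sqq⁻¹ * (1 - sqq)⁻¹, 2 * b, by linarith, ?_⟩
  intro y hy Ω instΩ μ instμ η hη
  set γ : ℝ := Real.log sqq⁻¹ with hγdef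
  have hexpγ : ∀ n : ℕ, Real.exp (γ * n) = sqq⁻¹ ^ n := by
    intro n
    rw [hγdef, mul_comm, Real.exp_nat_mul, Real.exp_log (by positivity)]
  set R : ℝ≥0∞ := ENNReal.ofReal r with hRdef
  set B : ℝ≥0∞ := ENNReal.ofReal (Real.exp (b * y)) with hBdef
  have hB1 : 1 ≤ B := by
    rw [hBdef]
    apply ENNReal.one_le_ofReal.2
    rw [← Real.exp_zero]
    apply Real.exp_le_exp.2
    have : (0:ℝ) ≤ (y:ℝ) := by exact_mod_cast hy
    positivity
  have hBtop : B ≠ ⊤ := ENNReal.ofReal_ne_top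
  -- covering bound
  have hcov : ∀ n : ℕ, μ {ω | ∀ i ≤ n, η i ω ≠ 0} ≤ R ^ n * B := by
    intro n
    set φy : ℤ → ℝ≥0∞ := fun x => if x = y ∧ x ≠ 0 then 1 else 0 with hφydef
    set Cv : (Fin (n+1) → ℤ) → Set Ω := fun v =>
      {ω | (∀ i, v i ≠ 0) ∧ ∀ i ≤ n, η i ω
          = v ⟨min i n, Nat.lt_succ_of_le (min_le_right i n)⟩} with hCvdef
    have hsub : {ω | ∀ i ≤ n, η i ω ≠ 0} ⊆ ⋃ v, Cv v := by
      intro ω hω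
      refine Set.mem_iUnion.2 ⟨fun i => η i ω, ⟨?_, ?_⟩⟩
      · intro i; exact hω i (Nat.lt_succ_iff.mp i.isLt)
      · intro i hi
        show η i ω = η (min i n) ω
        rw [min_eq_left hi]
    have hcyl : ∀ v : Fin (n+1) → ℤ,
        μ (Cv v) ≤ φy (v 0) * ∏ i : Fin n, Kp w (v i.castSucc) (v i.succ) := by
      intro v
      by_cases hall : ∀ i, v i ≠ 0
      · have hCv : Cv v = {ω | ∀ i ≤ n, η i ω
            = (fun j : ℕ => v ⟨min j n, Nat.lt_succ_of_le (min_le_right j n)⟩) i} := by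
          ext ω
          simp only [hCvdef, Set.mem_setOf_eq]
          exact ⟨fun h => h.2, fun h => ⟨hall, h⟩⟩
        rw [hCv, hη.2 n (fun j : ℕ => v ⟨min j n, Nat.lt_succ_of_le (min_le_right j n)⟩)]
        have hx0 : (⟨min 0 n, Nat.lt_succ_of_le (min_le_right 0 n)⟩ : Fin (n+1)) = 0 := by
          apply Fin.ext; simp
        have hind : ENNReal.ofReal (if v ⟨min 0 n, Nat.lt_succ_of_le (min_le_right 0 n)⟩ = y
            then (1:ℝ) else 0) = φy (v 0) := by
          rw [hx0, hφydef]
          by_cases h : v 0 = y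
          · have hy0 : y ≠ 0 := h ▸ hall 0
            simp [h, hy0]
          · simp [h]
        rw [ENNReal.ofReal_mul (by split <;> norm_num)]
        rw [hind]
        apply mul_le_mul_right
        rw [ENNReal.ofReal_prod_of_nonneg (fun i _ => Pker_nonneg hw _ _)]
        rw [← Fin.prod_univ_eq_prod_range (fun j =>
          ENNReal.ofReal (Pker w (v ⟨min j n, Nat.lt_succ_of_le (min_le_right j n)⟩)
            (v ⟨min (j+1) n, Nat.lt_succ_of_le (min_le_right (j+1) n)⟩))) n]
        apply le_of_eq
        apply Finset.prod_congr rfl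
        intro i _
        have h1 : (⟨min (i : ℕ) n, Nat.lt_succ_of_le (min_le_right _ n)⟩ : Fin (n+1))
            = i.castSucc := by
          apply Fin.ext
          simp [min_eq_left (le_of_lt i.isLt)]
        have h2 : (⟨min ((i : ℕ)+1) n, Nat.lt_succ_of_le (min_le_right _ n)⟩ : Fin (n+1))
            = i.succ := by
          apply Fin.ext
          simp [min_eq_left (Nat.succ_le_of_lt i.isLt)]
        rw [h1, h2, Kp, if_pos (hall i.succ)]
      · have hCv : Cv v = ∅ :=
          Set.eq_empty_iff_forall_notMem.2 (fun ω hω => hall hω.1)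
        rw [hCv, measure_empty]
        exact zero_le
    calc μ {ω | ∀ i ≤ n, η i ω ≠ 0} ≤ μ (⋃ v, Cv v) := measure_mono hsub
      _ ≤ ∑' v : Fin (n+1) → ℤ, μ (Cv v) := measure_iUnion_le Cv
      _ ≤ ∑' v : Fin (n+1) → ℤ, φy (v 0) * ∏ i : Fin n, Kp w (v i.castSucc) (v i.succ) :=
          ENNReal.tsum_le_tsum hcyl
      _ = ∑' x : ℤ, φy x * ufun w n x := S_eq w n φy
      _ = φy y * ufun w n y := by
          apply tsum_eq_single
          intro x hx
          rw [hφydef]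
          simp only
          rw [if_neg (by tauto), zero_mul]
      _ ≤ R ^ n * B := by
          rcases eq_or_ne y 0 with rfl | hy0
          · have : φy 0 = 0 := by rw [hφydef]; simp
            rw [this, zero_mul]
            exact zero_le
          · have hy1 : 1 ≤ y := by omega
            have hone : φy y = 1 := by rw [hφydef]; simp [hy0]
            rw [hone, one_mul, hRdef, hBdef]
            exact ufun_le hw hb hc1 hs1 hb0.le n y hy1
  -- the never-hitting set has measure zero
  have hnever : μ {ω | ∀ n, η n ω ≠ 0} = 0 := by
    have hle : ∀ n : ℕ, μ {ω | ∀ k, η k ω ≠ 0} ≤ R ^ n * B := by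
      intro n
      refine le_trans (measure_mono ?_) (hcov n)
      intro ω hω i _
      exact hω i
    refine le_antisymm ?_ zero_le
    have hR1 : R < 1 := by
      rw [hRdef]
      exact ENNReal.ofReal_lt_one.2 hr1
    have htend : Tendsto (fun n : ℕ => R ^ n * B) atTop (nhds 0) := by
      have h0 : Tendsto (fun n : ℕ => R ^ n) atTop (nhds 0) :=
        ENNReal.tendsto_pow_atTop_nhds_zero_of_lt_one hR1
      have := ENNReal.Tendsto.mul_const h0 (Or.inr hBtop)
      simpa using this
    exact ge_of_tendsto' htend hle
  -- assemble
  rw [hnever, mul_zero, add_zero]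
  have hsplit : ∑' n : ℕ, ENNReal.ofReal (Real.exp (γ * n)) *
      μ {ω | η n ω = 0 ∧ ∀ m < n, η m ω ≠ 0}
      = (ENNReal.ofReal (Real.exp (γ * (0:ℕ))) * μ {ω | η 0 ω = 0 ∧ ∀ m < 0, η m ω ≠ 0})
        + ∑' n : ℕ, ENNReal.ofReal (Real.exp (γ * (n+1:ℕ))) *
            μ {ω | η (n+1) ω = 0 ∧ ∀ m < n+1, η m ω ≠ 0} :=
    tsum_eq_zero_add' ENNReal.summable
  rw [hsplit]
  have hA0 : ENNReal.ofReal (Real.exp (γ * (0:ℕ))) * μ {ω | η 0 ω = 0 ∧ ∀ m < 0, η m ω ≠ 0}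
      ≤ 1 := by
    rw [Nat.cast_zero, mul_zero, Real.exp_zero, ENNReal.ofReal_one, one_mul]
    exact prob_le_one
  have hAn : ∀ n : ℕ, ENNReal.ofReal (Real.exp (γ * (n+1:ℕ))) *
      μ {ω | η (n+1) ω = 0 ∧ ∀ m < n+1, η m ω ≠ 0}
      ≤ ENNReal.ofReal (sqq⁻¹ * sqq ^ n) * B := by
    intro n
    have hsubn : {ω | η (n+1) ω = 0 ∧ ∀ m < n+1, η m ω ≠ 0} ⊆ {ω | ∀ i ≤ n, η i ω ≠ 0} :=
      fun ω hω i hi => hω.2 i (by omega)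
    calc ENNReal.ofReal (Real.exp (γ * (n+1:ℕ))) *
        μ {ω | η (n+1) ω = 0 ∧ ∀ m < n+1, η m ω ≠ 0}
        ≤ ENNReal.ofReal (Real.exp (γ * (n+1:ℕ))) * (R ^ n * B) :=
          mul_le_mul_right (le_trans (measure_mono hsubn) (hcov n)) _
      _ = ENNReal.ofReal (Real.exp (γ * (n+1:ℕ)) * r ^ n) * B := by
          rw [ENNReal.ofReal_mul (Real.exp_nonneg _), hRdef, ENNReal.ofReal_pow hr0, mul_assoc]
      _ ≤ ENNReal.ofReal (sqq⁻¹ * sqq ^ n) * B := by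
          apply mul_le_mul_left
          apply ENNReal.ofReal_le_ofReal
          rw [hexpγ (n+1)]
          calc sqq⁻¹ ^ (n+1) * r ^ n ≤ sqq⁻¹ ^ (n+1) * (sqq^2) ^ n := by
                apply mul_le_mul_of_nonneg_left
                · exact pow_le_pow_left₀ hr0 hrle n
                · positivity
            _ = sqq⁻¹ * sqq ^ n := by
                have hne : sqq ≠ 0 := ne_of_gt hsqq0
                rw [pow_succ', mul_assoc, ← mul_pow]
                congr 2
                rw [pow_two, ← mul_assoc, inv_mul_cancel₀ hne, one_mul]
  have hby : 2 * b / 2 * (y:ℝ) = b * y := by ring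
  rw [hby]
  have hM0 : (0:ℝ) ≤ sqq⁻¹ * (1 - sqq)⁻¹ :=
    mul_nonneg (inv_nonneg.2 hsqq0.le) (inv_nonneg.2 (by linarith))
  calc (ENNReal.ofReal (Real.exp (γ * (0:ℕ))) * μ {ω | η 0 ω = 0 ∧ ∀ m < 0, η m ω ≠ 0})
        + ∑' n : ℕ, ENNReal.ofReal (Real.exp (γ * (n+1:ℕ))) *
            μ {ω | η (n+1) ω = 0 ∧ ∀ m < n+1, η m ω ≠ 0}
      ≤ 1 + ∑' n : ℕ, ENNReal.ofReal (sqq⁻¹ * sqq ^ n) * B :=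
        add_le_add hA0 (ENNReal.tsum_le_tsum hAn)
    _ = 1 + (ENNReal.ofReal sqq⁻¹ * B) * ∑' n : ℕ, (ENNReal.ofReal sqq) ^ n := by
        congr 1
        rw [← ENNReal.tsum_mul_left]
        apply tsum_congr; intro n
        rw [ENNReal.ofReal_mul (inv_nonneg.2 hsqq0.le), ENNReal.ofReal_pow hsqq0.le]
        ring
    _ = 1 + (ENNReal.ofReal sqq⁻¹ * B) * (1 - ENNReal.ofReal sqq)⁻¹ := by
        rw [ENNReal.tsum_geometric]
    _ ≤ ENNReal.ofReal ((1 + sqq⁻¹ * (1 - sqq)⁻¹) * Real.exp (b * y)) := by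
        have hinv : (1 - ENNReal.ofReal sqq)⁻¹ = ENNReal.ofReal ((1 - sqq)⁻¹) := by
          rw [ENNReal.ofReal_inv_of_pos (by linarith : (0:ℝ) < 1 - sqq),
            ENNReal.ofReal_sub 1 hsqq0.le, ENNReal.ofReal_one]
        rw [hinv]
        rw [ENNReal.ofReal_mul (by linarith : (0:ℝ) ≤ 1 + sqq⁻¹ * (1 - sqq)⁻¹)]
        rw [ENNReal.ofReal_add zero_le_one hM0, ENNReal.ofReal_one]
        rw [ENNReal.ofReal_mul (inv_nonneg.2 hsqq0.le)]
        rw [← hBdef]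
        rw [add_mul, one_mul]
        have hre : ENNReal.ofReal sqq⁻¹ * B * ENNReal.ofReal (1 - sqq)⁻¹
            = ENNReal.ofReal sqq⁻¹ * ENNReal.ofReal (1 - sqq)⁻¹ * B := by ring
        rw [hre]
        exact add_le_add_left hB1 _
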